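/- Let X be a convex subset of a real normed vector space, and let f, f_* : X → ℝ, with f differentiable and α-strongly convex on X and f_* G₂-Lipschitz on X. Let λ ≥ 0, Δ ≥ 0, and ε̃ ∈ ℝ. Suppose x* ∈ X minimizes f over X with f(x*) ≤ ε̃, and suppose x̂ ∈ X satisfies f(x̂) + λ f_*(x̂) ≤ inf_{x∈X} ( f(x) + λ f_*(x) ) + Δ. Then f(x̂) ≤ Δ + ε̃ + λ G₂ ( 2λG₂/α + √(2Δ/α) ). -/

import Mathlib

/-- Bias bound for weighted regularization with a possibly negative
regularizer.  If `f` is differentiable and `α`-strongly convex on `X`, `f_*` is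
`G₂`-Lipschitz on `X`, `x*` minimizes `f` over `X` with `f(x*) ≤ ε̃`, and `x̂` is
`Δ`-suboptimal for `f + λ f_*` on `X`, then
`f(x̂) ≤ Δ + ε̃ + λ G₂ (2λG₂/α + √(2Δ/α))`. -/
theorem stmt_13
    {E : Type*} [NormedAddCommGroup E] [NormedSpace ℝ E]
    (X : Set E) (hX : Convex ℝ X)
    (f fs : E → ℝ) (Df : E → (E →L[ℝ] ℝ))
    (α G₂ lam Δ ε : ℝ) (hα : 0 < α) (hG₂ : 0 ≤ G₂) (hlam : 0 ≤ lam) (hΔ : 0 ≤ Δ)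
    (hgrad : ∀ y ∈ X, HasFDerivWithinAt f (Df y) X y)
    (hsc : ∀ y ∈ X, ∀ z ∈ X, f z ≥ f y + Df y (z - y) + α / 2 * ‖z - y‖ ^ 2)
    (hlip : ∀ y ∈ X, ∀ z ∈ X, |fs y - fs z| ≤ G₂ * ‖y - z‖)
    (xstar : E) (hxs : xstar ∈ X)
    (hmin : ∀ y ∈ X, f xstar ≤ f y) (hval : f xstar ≤ ε)
    (xhat : E) (hxhat : xhat ∈ X)
    (hnear : f xhat + lam * fs xhat ≤
      sInf ((fun y => f y + lam * fs y) '' X) + Δ) :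
    f xhat ≤ Δ + ε + lam * G₂ * (2 * lam * G₂ / α + Real.sqrt (2 * Δ / α)) := by
  -- first-order optimality: Df xstar (y - xstar) ≥ 0 for y ∈ X
  have hkey : ∀ y ∈ X, 0 ≤ Df xstar (y - xstar) := by
    intro y hy
    have hmin' : IsLocalMinOn f X xstar := (isMinOn_iff.2 hmin).localize
    exact hmin'.hasFDerivWithinAt_nonneg (hgrad xstar hxs)
      (sub_mem_posTangentConeAt_of_segment_subset (hX.segment_subset hxs hy))
  -- quadratic growth: f y ≥ f xstar + α/2 ‖y - xstar‖²
  have hgrow : ∀ y ∈ X, f xstar + α / 2 * ‖y - xstar‖ ^ 2 ≤ f y := by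
    intro y hy
    have := hsc xstar hxs y hy
    have := hkey y hy
    linarith
  -- the regularized objective is bounded below
  have hbdd : BddBelow ((fun y => f y + lam * fs y) '' X) := by
    refine ⟨f xstar + lam * fs xstar - lam ^ 2 * G₂ ^ 2 / (2 * α), ?_⟩
    rintro v ⟨y, hy, rfl⟩
    have h1 := hgrow y hy
    have h2 : |fs xstar - fs y| ≤ G₂ * ‖xstar - y‖ := hlip xstar hxs y hy
    have h3 : fs xstar - fs y ≤ G₂ * ‖y - xstar‖ := by
      rw [← norm_sub_rev]; exact (abs_le.1 h2).2
    have hn : 0 ≤ ‖y - xstar‖ := norm_nonneg _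
    have hq : 0 ≤ (α * ‖y - xstar‖ - lam * G₂) ^ 2 := sq_nonneg _
    have hlg : 0 ≤ lam * G₂ := mul_nonneg hlam hG₂
    have h4 : lam * (fs xstar - fs y) ≤ lam * G₂ * ‖y - xstar‖ := by
      calc lam * (fs xstar - fs y) ≤ lam * (G₂ * ‖y - xstar‖) := by
            exact mul_le_mul_of_nonneg_left h3 hlam
        _ = lam * G₂ * ‖y - xstar‖ := by ring
    simp only
    have h5 : (lam * G₂ * ‖y - xstar‖ - α / 2 * ‖y - xstar‖ ^ 2) * (2 * α)
        ≤ lam ^ 2 * G₂ ^ 2 := by nlinarith [hq]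
    have h6 := (le_div_iff₀ (by positivity : (0:ℝ) < 2 * α)).mpr h5
    linarith
  have hle : sInf ((fun y => f y + lam * fs y) '' X) ≤ f xstar + lam * fs xstar :=
    csInf_le hbdd ⟨xstar, hxs, rfl⟩
  set r := ‖xhat - xstar‖ with hrdef
  have hr0 : 0 ≤ r := norm_nonneg _
  have hr1 : f xstar + α / 2 * r ^ 2 ≤ f xhat := hgrow xhat hxhat
  have hlip2 : fs xstar - fs xhat ≤ G₂ * r := by
    rw [hrdef, ← norm_sub_rev]
    exact (abs_le.1 (hlip xstar hxs xhat hxhat)).2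
  have hr2 : f xhat ≤ f xstar + Δ + lam * G₂ * r := by
    have : lam * (fs xstar - fs xhat) ≤ lam * (G₂ * r) :=
      mul_le_mul_of_nonneg_left hlip2 hlam
    nlinarith
  -- combine: α/2 r² ≤ Δ + lam G₂ r, hence r ≤ 2 lam G₂ / α + √(2Δ/α)
  have hquad : α / 2 * r ^ 2 ≤ Δ + lam * G₂ * r := by linarith
  set s := Real.sqrt (2 * Δ / α) with hsdef
  have hs0 : 0 ≤ s := Real.sqrt_nonneg _
  have hs2 : s ^ 2 = 2 * Δ / α := Real.sq_sqrt (by positivity)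
  have hlg : 0 ≤ lam * G₂ := mul_nonneg hlam hG₂
  have hrbound : lam * G₂ * r ≤ lam * G₂ * (2 * lam * G₂ / α + s) := by
    rcases eq_or_lt_of_le hlg with h0 | hpos
    · rw [← h0]; simp
    · have hr : r ≤ 2 * lam * G₂ / α + s := by
        by_contra h
        push_neg at h
        have hαs2 : α * s ^ 2 = 2 * Δ := by
          rw [hs2]; field_simp [hα.ne']
        have hdiv : 0 < 2 * lam * G₂ / α := div_pos (by linarith) hα
        have h' : 2 * lam * G₂ < (r - s) * α := (div_lt_iff₀ hα).mp (by linarith)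
        have hrs : 0 < r + s := by linarith
        nlinarith [mul_lt_mul_of_pos_right h' hrs, mul_nonneg hlg hs0]
      exact mul_le_mul_of_nonneg_left hr hlg
  linarith
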